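/- Let H = (h_i)_{i∈I} be a finite family of functions from a finite set E to a finite set F, let X be a random variable taking values in E, and suppose the collision probability satisfies P(h(e) = h(e')) = (1 + ε)/|F|, where h is uniform over H and e, e' are independent copies of X. Then the expectation over h of the statistical distance between the distribution of h(e) and the uniform distribution on F is at most (1/2)·√ε. -/

import Mathlib

open Finset

/-- Leftover hash lemma: if a finite family of functions `h : I → E → G` has collision
probability `(1+ε)/|G|` on inputs drawn from a distribution `X`, then the average (over a
uniform member of the family) statistical distance between the image distribution and the
uniform distribution on `G` is at most `√ε / 2`. -/
theorem stmt_14 (I E G : Type) [Fintype I] [Fintype E] [Fintype G]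
    [Nonempty I] [Nonempty G] [DecidableEq G]
    (h : I → E → G) (X : E → ℝ) (hX0 : ∀ e, 0 ≤ X e) (hX1 : ∑ e, X e = 1)
    (ε : ℝ)
    (hcol : (∑ i, ∑ e, ∑ e', if h i e = h i e' then X e * X e' else 0)
        / (Fintype.card I : ℝ) = (1 + ε) / (Fintype.card G : ℝ)) :
    (∑ i, (1 / 2) * ∑ g : G,
        |(∑ e ∈ univ.filter (fun e => h i e = g), X e) - 1 / (Fintype.card G : ℝ)|)
      / (Fintype.card I : ℝ)
    ≤ (1 / 2) * Real.sqrt ε := by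
  set m : ℝ := (Fintype.card I : ℝ) with hm
  set n : ℝ := (Fintype.card G : ℝ) with hn
  have mpos : (0:ℝ) < m := by rw [hm]; exact_mod_cast Fintype.card_pos (α := I)
  have npos : (0:ℝ) < n := by rw [hn]; exact_mod_cast Fintype.card_pos (α := G)
  set p : I → G → ℝ := fun i g => ∑ e ∈ univ.filter (fun e => h i e = g), X e with hp
  have hsum1 : ∀ i, ∑ g, p i g = 1 := fun i => by
    rw [← hX1]; exact Finset.sum_fiberwise univ (h i) X
  have hcol2 : ∀ i, (∑ e, ∑ e', if h i e = h i e' then X e * X e' else 0)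
      = ∑ g, (p i g)^2 := by
    intro i
    have step : ∀ e, (∑ e', if h i e = h i e' then X e * X e' else 0)
        = X e * p i (h i e) := by
      intro e
      rw [hp, Finset.mul_sum, Finset.sum_filter]
      exact Finset.sum_congr rfl fun e' _ => by simp [eq_comm]
    calc ∑ e, ∑ e', (if h i e = h i e' then X e * X e' else 0)
        = ∑ e, X e * p i (h i e) := Finset.sum_congr rfl fun e _ => step e
      _ = ∑ g, ∑ e ∈ univ.filter (fun e => h i e = g), X e * p i (h i e) :=
          (Finset.sum_fiberwise univ (h i) _).symm
      _ = ∑ g, (p i g)^2 := by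
          refine Finset.sum_congr rfl fun g _ => ?_
          rw [Finset.sum_congr rfl (fun e he =>
            by rw [(Finset.mem_filter.mp he).2] :
            ∀ e ∈ univ.filter (fun e => h i e = g),
              X e * p i (h i e) = X e * p i g), ← Finset.sum_mul, sq]
  have hT : ∑ i, ∑ g, (p i g)^2 = (1 + ε) * m / n := by
    have := (div_eq_iff (ne_of_gt mpos)).mp hcol
    rw [← Finset.sum_congr rfl fun i _ => hcol2 i, this]; ring
  have hQ : ∑ i, ∑ g, (p i g - 1/n)^2 = ε * m / n := by
    have expand : ∀ i, ∑ g, (p i g - 1/n)^2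
        = (∑ g, (p i g)^2) - 2/n + 1/n := by
      intro i
      have : ∀ g, (p i g - 1/n)^2 = (p i g)^2 - (2/n) * p i g + 1/n^2 := by
        intro g; field_simp; ring
      rw [Finset.sum_congr rfl fun g _ => this g, Finset.sum_add_distrib,
        Finset.sum_sub_distrib, ← Finset.mul_sum, hsum1, Finset.sum_const,
        Finset.card_univ]
      have : (Fintype.card G : ℝ) = n := rfl
      simp only [nsmul_eq_mul, this]
      field_simp
    rw [Finset.sum_congr rfl fun i _ => expand i, Finset.sum_add_distrib,
      Finset.sum_sub_distrib, ← Finset.sum_congr rfl fun i _ => rfl]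
    simp [Finset.sum_const, Finset.card_univ, hT, ← hm]
    field_simp
    ring
  have heps : 0 ≤ ε := by
    have hQ0 : 0 ≤ ∑ i, ∑ g, (p i g - 1/n)^2 :=
      Finset.sum_nonneg fun i _ => Finset.sum_nonneg fun g _ => sq_nonneg _
    rw [hQ] at hQ0
    by_contra hlt
    push_neg at hlt
    have : ε * m / n < 0 := div_neg_of_neg_of_pos (by nlinarith) npos
    linarith
  -- Cauchy-Schwarz
  set S : ℝ := ∑ i, ∑ g, |p i g - 1/n| with hS
  have hCS : S^2 ≤ m * n * ∑ i, ∑ g, (p i g - 1/n)^2 := by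
    have := sq_sum_le_card_mul_sum_sq (s := (univ : Finset (I × G)))
      (f := fun ig => |p ig.1 ig.2 - 1/n|)
    rw [Fintype.sum_prod_type] at this
    simp only [sq_abs] at this
    rw [Fintype.sum_prod_type] at this
    calc S^2 ≤ (univ : Finset (I × G)).card * ∑ i, ∑ g, (p i g - 1/n)^2 := this
      _ = m * n * ∑ i, ∑ g, (p i g - 1/n)^2 := by
          rw [Finset.card_univ, Fintype.card_prod]; push_cast; ring
  have hS0 : 0 ≤ S := Finset.sum_nonneg fun i _ => Finset.sum_nonneg fun g _ => abs_nonneg _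
  have hSle : S ≤ m * Real.sqrt ε := by
    have h1 : S^2 ≤ ε * m^2 := by
      rw [hQ] at hCS
      calc S^2 ≤ m * n * (ε * m / n) := hCS
        _ = ε * m^2 := by field_simp
    have h2 : m * Real.sqrt ε = Real.sqrt (ε * m^2) := by
      rw [Real.sqrt_mul heps, Real.sqrt_sq mpos.le]; ring
    rw [h2]
    exact (Real.le_sqrt hS0 (by positivity)).mpr h1
  -- conclude
  have : (∑ i, (1 / 2) * ∑ g : G, |p i g - 1/n|) = (1/2) * S := by
    rw [hS, Finset.mul_sum]
  rw [this]
  rw [div_le_iff₀ mpos]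
  calc (1/2) * S ≤ (1/2) * (m * Real.sqrt ε) := by linarith
    _ = 1/2 * Real.sqrt ε * m := by ring
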